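/- The first coefficient of the binary cubic form a_t n_u k_θ · x₊ equals t³ sin(6πθ)/(108)^{1/4}, where x₊ = (3v²w − w³)/(108)^{1/4}. -/

import Mathlib

open Real Matrix

/-- The value of the binary cubic form with coefficient vector `x` at `(v,w)`. -/
noncomputable def cubicVal (x : Fin 4 → ℝ) (v w : ℝ) : ℝ :=
  x 0 * v^3 + x 1 * v^2 * w + x 2 * v * w^2 + x 3 * w^3

/-- `a_t = diag(t, 1/t)`. -/
noncomputable def aMat (t : ℝ) : Matrix (Fin 2) (Fin 2) ℝ := !![t, 0; 0, t⁻¹]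

/-- `n_u`, the lower-triangular unipotent with entry `u`. -/
def nMat (u : ℝ) : Matrix (Fin 2) (Fin 2) ℝ := !![1, 0; u, 1]

/-- `k_θ`, rotation by angle `2πθ`. -/
noncomputable def kMat (θ : ℝ) : Matrix (Fin 2) (Fin 2) ℝ :=
  !![Real.cos (2*π*θ), Real.sin (2*π*θ); -Real.sin (2*π*θ), Real.cos (2*π*θ)]

/-- The coefficient of `v³` in `a_t n_u k_θ · x₊` equals `t³ sin(6πθ)/(108)^{1/4}`,
where `x₊ = (3v²w − w³)/(108)^{1/4}` and the action is `(g·x)(v,w) = x((v,w)g)`. -/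
theorem first_coeff_xplus (t u θ : ℝ) (ht : 0 < t) (y : Fin 4 → ℝ)
    (hy : ∀ v w : ℝ, cubicVal y v w
        = cubicVal ![0, 3 / (108:ℝ)^((1:ℝ)/4), 0, -1 / (108:ℝ)^((1:ℝ)/4)]
            (v * (aMat t * nMat u * kMat θ) 0 0 + w * (aMat t * nMat u * kMat θ) 1 0)
            (v * (aMat t * nMat u * kMat θ) 0 1 + w * (aMat t * nMat u * kMat θ) 1 1)) :
    y 0 = t^3 * Real.sin (6*π*θ) / (108:ℝ)^((1:ℝ)/4) := by
  have h := hy 1 0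
  simp only [cubicVal, aMat, nMat, kMat, Matrix.mul_fin_two, Matrix.cons_val_zero,
    Matrix.cons_val_one, Matrix.head_cons, Matrix.head_fin_const, Matrix.cons_val_fin_one,
    Matrix.cons_val', Matrix.empty_val', Matrix.of_apply, Matrix.cons_val_two, Matrix.cons_val_three, Matrix.tail_cons] at h
  have hs : Real.sin (6*π*θ) = 3*Real.sin (2*π*θ) - 4*Real.sin (2*π*θ)^3 := by
    rw [show (6*π*θ) = 3*(2*π*θ) by ring, Real.sin_three_mul]
  have hc : Real.cos (2*π*θ)^2 = 1 - Real.sin (2*π*θ)^2 := Real.cos_sq' _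
  field_simp at h ⊢
  rw [show π*θ*6 = 6*π*θ by ring, hs]
  have ht3 : t^3 ≠ 0 := by positivity
  apply mul_left_cancel₀ ht3
  linear_combination h + 3*t^6*Real.sin (2*π*θ)*hc
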